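/- For every job j ∈ 𝒥 and every interval endpoint t ∈ 𝒯̂, the rounded cost satisfies f_j(t) ≤ f'_j(t) ≤ (1+ε) · f_j(t). -/

import Mathlib

open Finset
open scoped Classical

/-- `t` belongs to class `k` of the cost function `g`: class `0` is `{t : g t = 0}` and,
for `k ≥ 1`, class `k` is `{t : (1+ε)^(k−1) ≤ g t < (1+ε)^k}`. -/
def InClass (ε : ℝ) (g : ℕ → ℕ) (k t : ℕ) : Prop :=
  if k = 0 then g t = 0
  else (1 + ε) ^ (k - 1) ≤ (g t : ℝ) ∧ (g t : ℝ) < (1 + ε) ^ k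

/-- The set `𝒯̂_j` of left endpoints: the times `t ∈ 𝒯 = {1,…,T}` that are the minimum
element of some (nonempty) class of `g`. -/
noncomputable def leftEnds (T : ℕ) (ε : ℝ) (g : ℕ → ℕ) : Finset ℕ :=
  (Icc 1 T).filter fun t => ∃ k : ℕ,
    InClass ε g k t ∧ ∀ s ∈ Icc 1 T, InClass ε g k s → t ≤ s

/-- The set of interval endpoints `𝒯̂ = (∪_{j∈𝒥} 𝒯̂_j) ∪ {1}`. -/
noncomputable def That {n : ℕ} (T : ℕ) (ε : ℝ) (f : Fin n → ℕ → ℕ) : Finset ℕ :=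
  (univ.biUnion fun j => leftEnds T ε (f j)) ∪ {1}

/-- The rounded cost function `f'`: writing `𝒯̂ = {t_1 < t_2 < ⋯ < t_τ}`, we set
`f'_j(t_i) = f_j(t_{i+1} − 1)` for `i < τ` and `f'_j(t_τ) = f_j(T)`.  (For `t ∈ 𝒯̂`, the
`min` below is the next endpoint of `𝒯̂` after `t`, or `T + 1` if there is none.) -/
noncomputable def fround {n : ℕ} (T : ℕ) (ε : ℝ) (f : Fin n → ℕ → ℕ)
    (j : Fin n) (t : ℕ) : ℕ :=
  f j ((((That T ε f).filter fun s => t < s).min.untopD (T + 1)) - 1)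

lemma exists_class (ε : ℝ) (hε : 0 < ε) (g : ℕ → ℕ) (t : ℕ) :
    ∃ k, InClass ε g k t := by
  by_cases h : g t = 0
  · exact ⟨0, by simp [InClass, h]⟩
  · have h1 : (1:ℝ) ≤ (g t : ℝ) := by exact_mod_cast Nat.one_le_iff_ne_zero.mpr h
    have hb : (1:ℝ) < 1 + ε := by linarith
    have hex : ∃ k : ℕ, (g t : ℝ) < (1 + ε) ^ k := pow_unbounded_of_one_lt _ hb
    classical
    set K := Nat.find hex with hK
    have hKspec : (g t : ℝ) < (1 + ε) ^ K := Nat.find_spec hex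
    have hK0 : K ≠ 0 := by
      intro h0
      rw [h0] at hKspec
      simp at hKspec
      exact h hKspec
    have hlow : (1 + ε) ^ (K - 1) ≤ (g t : ℝ) := by
      have := Nat.find_min hex (m := K - 1) (by omega)
      linarith [not_lt.mp this]
    exact ⟨K, by simp [InClass, hK0, hlow, hKspec]⟩

lemma class_lt (ε : ℝ) (hε : 0 < ε) (g : ℕ → ℕ) {k k' a b : ℕ}
    (h : InClass ε g k a) (h' : InClass ε g k' b) (hkk : k < k') :
    (g a : ℝ) < (g b : ℝ) := by
  have hk'0 : k' ≠ 0 := by omega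
  rw [InClass, if_neg hk'0] at h'
  have hb : (1:ℝ) ≤ 1 + ε := by linarith
  by_cases hk0 : k = 0
  · rw [InClass, if_pos hk0] at h
    have : (1:ℝ) ≤ (1 + ε) ^ (k' - 1) := one_le_pow₀ hb
    rw [h]
    push_cast
    linarith [h'.1]
  · rw [InClass, if_neg hk0] at h
    have hle : (1 + ε) ^ k ≤ (1 + ε) ^ (k' - 1) :=
      pow_le_pow_right₀ hb (by omega)
    linarith [h.2, h'.1]

/-- For every job `j ∈ 𝒥` and every interval endpoint `t ∈ 𝒯̂`, the
rounded cost satisfies `f_j(t) ≤ f'_j(t) ≤ (1+ε)·f_j(t)`. -/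
theorem stmt_14 {n : ℕ} (ε : ℝ) (hε : 0 < ε)
    (p : Fin n → ℕ) (hp : ∀ j, 0 < p j)
    (T : ℕ) (hT : T = ∑ j, p j)
    (f : Fin n → ℕ → ℕ) (hf0 : ∀ j, f j 0 = 0)
    (hfmono : ∀ j, ∀ s t : ℕ, s ≤ t → t ≤ T → f j s ≤ f j t) :
    ∀ j : Fin n, ∀ t ∈ That T ε f,
      f j t ≤ fround T ε f j t ∧
      (fround T ε f j t : ℝ) ≤ (1 + ε) * (f j t : ℝ) := by
  intro j t ht
  -- T ≥ 1
  have hT1 : 1 ≤ T := by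
    have : p j ≤ ∑ i, p i := Finset.single_le_sum (fun i _ => Nat.zero_le _) (mem_univ j)
    have := hp j; omega
  -- 1 ≤ t ∧ t ≤ T
  have htIcc : 1 ≤ t ∧ t ≤ T := by
    rw [That, mem_union] at ht
    rcases ht with ht | ht
    · obtain ⟨i, _, hi⟩ := mem_biUnion.mp ht
      rw [leftEnds, mem_filter, mem_Icc] at hi
      exact hi.1
    · rw [mem_singleton] at ht
      omega
  obtain ⟨ht1, htT⟩ := htIcc
  set F := (That T ε f).filter (fun s => t < s) with hF
  set s := (F.min.untopD (T + 1)) - 1 with hs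
  have hfr : fround T ε f j t = f j s := rfl
  -- key facts about s
  have key : t ≤ s ∧ s ≤ T ∧ ∀ m ∈ That T ε f, t < m → s < m := by
    by_cases hFne : F.Nonempty
    · have hmin : F.min = (F.min' hFne : WithTop ℕ) := (Finset.coe_min' hFne).symm
      set m₁ := F.min' hFne with hm₁
      have hm₁F : m₁ ∈ F := Finset.min'_mem _ _
      rw [hF, mem_filter] at hm₁F
      have htm₁ : t < m₁ := hm₁F.2
      have hm₁T : m₁ ≤ T := by
        have := hm₁F.1
        rw [That, mem_union] at this
        rcases this with h | h
        · obtain ⟨i, _, hi⟩ := mem_biUnion.mp h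
          rw [leftEnds, mem_filter, mem_Icc] at hi
          exact hi.1.2
        · rw [mem_singleton] at h; omega
      have hsval : s = m₁ - 1 := by rw [hs, hmin]; rfl
      refine ⟨by omega, by omega, ?_⟩
      intro m hm htm
      have : m₁ ≤ m := Finset.min'_le _ _ (by rw [hF, mem_filter]; exact ⟨hm, htm⟩)
      omega
    · have hFe : F = ∅ := Finset.not_nonempty_iff_eq_empty.mp hFne
      have hsval : s = T := by rw [hs, hFe]; simp
      refine ⟨by omega, by omega, ?_⟩
      intro m hm htm
      exact absurd (Finset.nonempty_of_ne_empty (Finset.ne_empty_of_mem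
        (by rw [hF, mem_filter]; exact ⟨hm, htm⟩ : m ∈ F))) (by rwa [hF] at hFne ⊢)
  obtain ⟨hts, hsT, hnoend⟩ := key
  have hle : f j t ≤ f j s := hfmono j t s hts hsT
  obtain ⟨k, hk⟩ := exists_class ε hε (f j) t
  obtain ⟨k', hk'⟩ := exists_class ε hε (f j) s
  -- k = k'
  have hkk : k = k' := by
    rcases lt_trichotomy k k' with hlt | heq | hgt
    · exfalso
      -- min of class k' is an endpoint strictly between t and s+1
      set C := (Icc 1 T).filter (fun x => InClass ε (f j) k' x) with hC
      have hsC : s ∈ C := by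
        rw [hC, mem_filter, mem_Icc]
        exact ⟨⟨by omega, hsT⟩, hk'⟩
      have hCne : C.Nonempty := ⟨s, hsC⟩
      set m₀ := C.min' hCne with hm₀
      have hm₀C : m₀ ∈ C := Finset.min'_mem _ _
      rw [hC, mem_filter] at hm₀C
      have hm₀That : m₀ ∈ That T ε f := by
        rw [That, mem_union]
        left
        refine mem_biUnion.mpr ⟨j, mem_univ j, ?_⟩
        rw [leftEnds, mem_filter]
        exact ⟨hm₀C.1, k', hm₀C.2, fun x hx hxk =>
          Finset.min'_le _ _ (by rw [hC, mem_filter]; exact ⟨hx, hxk⟩)⟩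
      have htm₀ : t < m₀ := by
        by_contra hcon
        push_neg at hcon
        have h1 : f j m₀ ≤ f j t := hfmono j m₀ t hcon htT
        have h2 : (f j t : ℝ) < f j m₀ := class_lt ε hε (f j) hk hm₀C.2 hlt
        exact absurd h2 (by push_cast; exact_mod_cast not_lt.mpr h1)
      have hm₀s : m₀ ≤ s := Finset.min'_le _ _ hsC
      have := hnoend m₀ hm₀That htm₀
      omega
    · exact heq
    · exfalso
      have h2 : (f j s : ℝ) < f j t := class_lt ε hε (f j) hk' hk hgt
      exact absurd h2 (by exact_mod_cast not_lt.mpr hle)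
  subst hkk
  by_cases hk0 : k = 0
  · rw [InClass, if_pos hk0] at hk hk'
    refine ⟨by omega, ?_⟩
    rw [hfr, hk, hk']
    simp
  · rw [InClass, if_neg hk0] at hk hk'
    refine ⟨hle, ?_⟩
    rw [hfr]
    have hpow : (1 + ε) ^ k = (1 + ε) * (1 + ε) ^ (k - 1) := by
      conv_lhs => rw [show k = (k - 1) + 1 by omega]
      rw [pow_succ]; ring
    have h1 : (1 + ε) * (1 + ε) ^ (k - 1) ≤ (1 + ε) * (f j t : ℝ) :=
      mul_le_mul_of_nonneg_left hk.1 (by linarith)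
    linarith [hk'.2]
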